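/- Let V be a smooth bivector (2-vector) field on an open set U ⊆ ℝⁿ with components V^{ij}(y) = V_y(εⁱ,εʲ), where (εⁱ) is the dual basis of the standard basis of ℝⁿ. If V has constant coefficients on a neighbourhood of x ∈ U, then its Schouten–Nijenhuis bracket with itself vanishes there: for all indices i,j,k, the identity Σ_{l=1}^{n} ( V^{li} ∂V^{jk}/∂x^l + V^{lj} ∂V^{ki}/∂x^l + V^{lk} ∂V^{ij}/∂x^l ) = 0 holds on a neighbourhood of x. -/

import Mathlib

open ContinuousLinearMap

private lemma sum7_eq {n : ℕ} (f : Fin n → Fin n → Fin n → Fin n → Fin n → Fin n → Fin n → ℝ) :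
    (∑ z : Fin n × Fin n × Fin n × Fin n × Fin n × Fin n × Fin n,
        f z.1 z.2.1 z.2.2.1 z.2.2.2.1 z.2.2.2.2.1 z.2.2.2.2.2.1 z.2.2.2.2.2.2)
    = ∑ a, ∑ b, ∑ c, ∑ d, ∑ e, ∑ g, ∑ h, f a b c d e g h := by
  simp only [Fintype.sum_prod_type]

private def Xfun {n : ℕ} (bb : Fin n → Fin n → ℝ) (aa : Fin n → Fin n → Fin n → ℝ)
    (cc : Fin n → Fin n → ℝ) (p q l : Fin n) : ℝ :=
  ∑ s, ∑ w, (∑ t, ∑ m, bb t s * aa l t m * bb p m) * bb q w * cc s w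

private def VCfun {n : ℕ} (bb : Fin n → Fin n → ℝ) (cc : Fin n → Fin n → ℝ) (a b : Fin n) : ℝ :=
  ∑ p, ∑ q, bb a p * bb b q * cc p q

private def gfun {n : ℕ} (bb : Fin n → Fin n → ℝ) (aa : Fin n → Fin n → Fin n → ℝ)
    (b r s : Fin n) : ℝ := ∑ l, ∑ t, ∑ m, bb l r * bb t s * aa l t m * bb b m

private def Ffun {n : ℕ} (bb : Fin n → Fin n → ℝ) (cc : Fin n → Fin n → ℝ) (d r : Fin n) : ℝ :=
  ∑ w, cc r w * bb d w

private lemma gsym {n : ℕ} (bb : Fin n → Fin n → ℝ) (aa : Fin n → Fin n → Fin n → ℝ)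
    (haa : ∀ l t m, aa l t m = aa t l m) (b r s : Fin n) :
    gfun bb aa b r s = gfun bb aa b s r := by
  unfold gfun
  rw [Finset.sum_comm]
  refine Finset.sum_congr rfl fun l _ => Finset.sum_congr rfl fun t _ =>
    Finset.sum_congr rfl fun m _ => ?_
  rw [haa]
  ring

private lemma hK {n : ℕ} (bb : Fin n → Fin n → ℝ) (aa : Fin n → Fin n → Fin n → ℝ)
    (cc : Fin n → Fin n → ℝ) (haa : ∀ l t m, aa l t m = aa t l m) (a b d : Fin n) :
    (∑ l, VCfun bb cc l a * Xfun bb aa cc b d l)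
      = ∑ r, ∑ s, gfun bb aa b r s * Ffun bb cc d r * Ffun bb cc a s := by
  have L : (∑ l, VCfun bb cc l a * Xfun bb aa cc b d l)
      = ∑ l, ∑ s, ∑ w, ∑ t, ∑ m, ∑ p, ∑ q,
          bb l p * bb a q * cc p q * bb t s * aa l t m * bb b m * bb d w * cc s w := by
    unfold VCfun Xfun
    simp only [Finset.sum_mul, Finset.mul_sum]
    refine Finset.sum_congr rfl fun l _ => Finset.sum_congr rfl fun s _ =>
      Finset.sum_congr rfl fun w _ => Finset.sum_congr rfl fun t _ =>
      Finset.sum_congr rfl fun m _ => Finset.sum_congr rfl fun p _ =>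
      Finset.sum_congr rfl fun q _ => by ring
  have R : (∑ r, ∑ s, gfun bb aa b r s * Ffun bb cc d r * Ffun bb cc a s)
      = ∑ r, ∑ s, ∑ qq, ∑ w, ∑ l, ∑ t, ∑ m,
          bb l r * bb t s * aa l t m * bb b m * cc r w * bb d w * cc s qq * bb a qq := by
    unfold gfun Ffun
    simp only [Finset.sum_mul, Finset.mul_sum]
    refine Finset.sum_congr rfl fun r _ => Finset.sum_congr rfl fun s _ =>
      Finset.sum_congr rfl fun qq _ => Finset.sum_congr rfl fun w _ =>
      Finset.sum_congr rfl fun l _ => Finset.sum_congr rfl fun t _ =>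
      Finset.sum_congr rfl fun m _ => by ring
  rw [L, R, ← sum7_eq, ← sum7_eq]
  refine Fintype.sum_equiv
    ⟨fun z => (z.2.1, z.2.2.2.2.2.1, z.2.2.2.2.2.2, z.2.2.1, z.2.2.2.1, z.1, z.2.2.2.2.1),
     fun z => (z.2.2.2.2.2.1, z.1, z.2.2.2.1, z.2.2.2.2.1, z.2.2.2.2.2.2, z.2.1, z.2.2.1),
     fun z => rfl, fun z => rfl⟩ _ _ fun z => ?_
  obtain ⟨l, s, w, t, m, p, q⟩ := z
  simp only [Equiv.coe_fn_mk]
  rw [haa l t m]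
  ring

private lemma schouten_algebra {n : ℕ} (bb : Fin n → Fin n → ℝ)
    (aa : Fin n → Fin n → Fin n → ℝ) (cc : Fin n → Fin n → ℝ)
    (haa : ∀ l t m, aa l t m = aa t l m) (i j k : Fin n) :
    ∑ l, (VCfun bb cc l i * (Xfun bb aa cc k j l - Xfun bb aa cc j k l)
        + VCfun bb cc l j * (Xfun bb aa cc i k l - Xfun bb aa cc k i l)
        + VCfun bb cc l k * (Xfun bb aa cc j i l - Xfun bb aa cc i j l)) = 0 := by
  have Tsym : ∀ b d a : Fin n,
      (∑ r, ∑ s, gfun bb aa b r s * Ffun bb cc d r * Ffun bb cc a s)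
      = ∑ r, ∑ s, gfun bb aa b r s * Ffun bb cc a r * Ffun bb cc d s := by
    intro b d a
    rw [Finset.sum_comm]
    refine Finset.sum_congr rfl fun r _ => Finset.sum_congr rfl fun s _ => ?_
    rw [gsym bb aa haa]
    ring
  have expand : ∀ l i j k : Fin n,
      VCfun bb cc l i * (Xfun bb aa cc k j l - Xfun bb aa cc j k l)
        + VCfun bb cc l j * (Xfun bb aa cc i k l - Xfun bb aa cc k i l)
        + VCfun bb cc l k * (Xfun bb aa cc j i l - Xfun bb aa cc i j l)
      = (VCfun bb cc l i * Xfun bb aa cc k j l - VCfun bb cc l i * Xfun bb aa cc j k l)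
        + (VCfun bb cc l j * Xfun bb aa cc i k l - VCfun bb cc l j * Xfun bb aa cc k i l)
        + (VCfun bb cc l k * Xfun bb aa cc j i l - VCfun bb cc l k * Xfun bb aa cc i j l) :=
    fun _ _ _ _ => by ring
  simp only [expand, Finset.sum_add_distrib, Finset.sum_sub_distrib]
  rw [hK bb aa cc haa i k j, hK bb aa cc haa i j k, hK bb aa cc haa j i k,
    hK bb aa cc haa j k i, hK bb aa cc haa k j i, hK bb aa cc haa k i j]
  rw [Tsym k j i, Tsym i k j, Tsym j i k]
  ring

private lemma clm_expand {n : ℕ} {F : Type*} [NormedAddCommGroup F] [NormedSpace ℝ F]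
    (T : (Fin n → ℝ) →L[ℝ] F) (v : Fin n → ℝ) :
    T v = ∑ m, v m • T (Pi.single m 1) := by
  conv_lhs => rw [show v = ∑ m, Pi.single m (v m) from (Finset.univ_sum_single v).symm]
  rw [map_sum]
  refine Finset.sum_congr rfl fun m _ => ?_
  rw [show (Pi.single m (v m) : Fin n → ℝ) = v m • (Pi.single m 1 : Fin n → ℝ) from by
    rw [← Pi.single_smul, smul_eq_mul, mul_one], map_smul]

private lemma upd0 {X : Type*} (p q r : X) : Function.update ![p, q] 0 r = ![r, q] := by
  funext i; fin_cases i <;> simp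
private lemma upd1 {X : Type*} (p q r : X) : Function.update ![p, q] 1 r = ![p, r] := by
  funext i; fin_cases i <;> simp

/-- bilinear expansion of a continuous 2-multilinear map on functionals over `Fin n → ℝ` -/
private lemma cexp {n : ℕ} (c : ((Fin n → ℝ) →L[ℝ] ℝ) [×2]→L[ℝ] ℝ)
    (φ ψ : (Fin n → ℝ) →L[ℝ] ℝ) :
    c ![φ, ψ] = ∑ s, ∑ w, φ (Pi.single s 1) * ψ (Pi.single w 1) *
      c ![ContinuousLinearMap.proj s, ContinuousLinearMap.proj w] := by
  have hL : ∀ (φ ψ : (Fin n → ℝ) →L[ℝ] ℝ),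
      (c.toContinuousLinearMap ![0, ψ] 0) φ = c ![φ, ψ] := by
    intro φ ψ
    rw [ContinuousMultilinearMap.toContinuousLinearMap_apply, upd0]
  have hR : ∀ (φ ψ : (Fin n → ℝ) →L[ℝ] ℝ),
      (c.toContinuousLinearMap ![φ, 0] 1) ψ = c ![φ, ψ] := by
    intro φ ψ
    rw [ContinuousMultilinearMap.toContinuousLinearMap_apply, upd1]
  have hφexp : ∀ (φ : (Fin n → ℝ) →L[ℝ] ℝ),
      φ = ∑ s, φ (Pi.single s 1) • (ContinuousLinearMap.proj s :
        (Fin n → ℝ) →L[ℝ] ℝ) := by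
    intro φ
    ext v
    rw [clm_expand φ v]
    simp only [ContinuousLinearMap.coe_sum', Finset.sum_apply,
      ContinuousLinearMap.coe_smul', Pi.smul_apply, proj_apply, smul_eq_mul]
    exact Finset.sum_congr rfl fun s _ => mul_comm _ _
  have step1 : c ![φ, ψ] = ∑ s, φ (Pi.single s 1) *
      c ![(ContinuousLinearMap.proj s : (Fin n → ℝ) →L[ℝ] ℝ), ψ] := by
    rw [← hL φ ψ]
    conv_lhs => rw [hφexp φ]
    rw [map_sum]
    exact Finset.sum_congr rfl fun s _ => by rw [map_smul, smul_eq_mul, hL]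
  rw [step1]
  refine Finset.sum_congr rfl fun s _ => ?_
  rw [show c ![(ContinuousLinearMap.proj s : (Fin n → ℝ) →L[ℝ] ℝ), ψ]
      = ∑ w, ψ (Pi.single w 1) * c ![ContinuousLinearMap.proj s,
        ContinuousLinearMap.proj w] from by
    rw [← hR _ ψ]
    conv_lhs => rw [hφexp ψ]
    rw [map_sum]
    exact Finset.sum_congr rfl fun w _ => by rw [map_smul, smul_eq_mul, hR]]
  rw [Finset.mul_sum]
  exact Finset.sum_congr rfl fun w _ => by ring

/-- derivative of `z ↦ c ![proj p ∘ B z, proj q ∘ B z]` -/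
private lemma der_exists {n : ℕ} (c : ((Fin n → ℝ) →L[ℝ] ℝ) [×2]→L[ℝ] ℝ)
    (B : (Fin n → ℝ) → ((Fin n → ℝ) →L[ℝ] (Fin n → ℝ)))
    (B' : (Fin n → ℝ) →L[ℝ] ((Fin n → ℝ) →L[ℝ] (Fin n → ℝ)))
    (y : Fin n → ℝ) (hB'at : HasFDerivAt B B' y) (p q : Fin n) :
    ∃ D : (Fin n → ℝ) →L[ℝ] ℝ,
      HasFDerivAt (fun z => c ![(ContinuousLinearMap.proj p).comp (B z),
        (ContinuousLinearMap.proj q).comp (B z)]) D y ∧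
      ∀ v, D v = c ![(ContinuousLinearMap.proj p).comp (B' v),
          (ContinuousLinearMap.proj q).comp (B y)]
        + c ![(ContinuousLinearMap.proj p).comp (B y),
          (ContinuousLinearMap.proj q).comp (B' v)] := by
  classical
  set pr : Fin 2 → ((Fin n → ℝ) →L[ℝ] ℝ) := ![ContinuousLinearMap.proj p,
    ContinuousLinearMap.proj q] with hpr
  set g : Fin 2 → (Fin n → ℝ) → ((Fin n → ℝ) →L[ℝ] ℝ) :=
    fun i z => (pr i).comp (B z) with hg
  set g' : Fin 2 → ((Fin n → ℝ) →L[ℝ] ((Fin n → ℝ) →L[ℝ] ℝ)) :=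
    fun i => (ContinuousLinearMap.compL ℝ (Fin n → ℝ) (Fin n → ℝ) ℝ (pr i)).comp B' with hg'
  have hgd : ∀ i, HasFDerivAt (g i) (g' i) y := by
    intro i
    exact ((ContinuousLinearMap.compL ℝ (Fin n → ℝ) (Fin n → ℝ) ℝ (pr i)).hasFDerivAt
      (x := B y)).comp y hB'at
  have hmain := HasFDerivAt.multilinear_comp c hgd
  have hfun : (fun z => c ![(ContinuousLinearMap.proj p).comp (B z),
      (ContinuousLinearMap.proj q).comp (B z)]) = (fun x => c fun i => g i x) := by
    funext z
    congr 1
    funext i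
    fin_cases i <;> simp [hg, hpr]
  refine ⟨∑ i : Fin 2, (c.toContinuousLinearMap (fun j => g j y) i).comp (g' i), ?_, ?_⟩
  · rw [hfun]
    exact hmain
  · intro v
    rw [ContinuousLinearMap.sum_apply, Fin.sum_univ_two]
    have h1 : (fun j => g j y) = ![(ContinuousLinearMap.proj p).comp (B y),
        (ContinuousLinearMap.proj q).comp (B y)] := by
      funext i; fin_cases i <;> simp [hg, hpr]
    simp only [ContinuousLinearMap.comp_apply,
      ContinuousMultilinearMap.toContinuousLinearMap_apply, h1]
    rw [upd0, upd1]
    congr 2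

/-- Constant coefficients for a `q`-vector field (see context). -/
def HasConstantCoefficientsVecAt (n q : ℕ) (U : Set (Fin n → ℝ))
    (V : (Fin n → ℝ) → (((Fin n → ℝ) →L[ℝ] ℝ) [×q]→L[ℝ] ℝ)) (x : Fin n → ℝ) : Prop :=
  ∃ W : Set (Fin n → ℝ), IsOpen W ∧ x ∈ W ∧ W ⊆ U ∧
    ∃ u : (Fin n → ℝ) → (Fin n → ℝ),
      ContDiffOn ℝ (⊤ : ℕ∞) u W ∧ Set.InjOn u W ∧ IsOpen (u '' W) ∧
      (∀ y ∈ W, Function.Bijective (fderiv ℝ u y)) ∧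
      ∃ c : ((Fin n → ℝ) →L[ℝ] ℝ) [×q]→L[ℝ] ℝ,
        ∀ y ∈ W, ∀ w : Fin q → ((Fin n → ℝ) →L[ℝ] ℝ),
          c w = V y (fun i => (w i).comp (fderiv ℝ u y))

set_option maxHeartbeats 1000000 in
/-- if a smooth bivector field `V` (with components
`V^{ij}(y) = V_y(εⁱ, εʲ)`) has constant coefficients near `x`, then its
Schouten–Nijenhuis bracket with itself vanishes near `x`:
`Σ_l ( V^{li} ∂_l V^{jk} + V^{lj} ∂_l V^{ki} + V^{lk} ∂_l V^{ij} ) = 0`. -/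
theorem constantCoefficients_schouten_self_zero (n : ℕ)
    (U : Set (Fin n → ℝ)) (hU : IsOpen U)
    (V : (Fin n → ℝ) → (((Fin n → ℝ) →L[ℝ] ℝ) [×2]→L[ℝ] ℝ))
    (hV : ContDiffOn ℝ (⊤ : ℕ∞) V U)
    (halt : ∀ y ∈ U, ∀ w : Fin 2 → ((Fin n → ℝ) →L[ℝ] ℝ), ∀ i j, i ≠ j → w i = w j →
      V y w = 0)
    (x : Fin n → ℝ) (hx : x ∈ U)
    (hcc : HasConstantCoefficientsVecAt n 2 U V x)
    (Vc : Fin n → Fin n → (Fin n → ℝ) → ℝ)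
    (hVc : ∀ i j y, Vc i j y =
      V y ![ContinuousLinearMap.proj i, ContinuousLinearMap.proj j]) :
    ∃ W : Set (Fin n → ℝ), IsOpen W ∧ x ∈ W ∧
      ∀ y ∈ W, ∀ i j k : Fin n,
        ∑ l : Fin n,
          (Vc l i y * fderiv ℝ (Vc j k) y (Pi.single l 1) +
           Vc l j y * fderiv ℝ (Vc k i) y (Pi.single l 1) +
           Vc l k y * fderiv ℝ (Vc i j) y (Pi.single l 1)) = 0 := by
  obtain ⟨W, hWo, hxW, hWU, u, hu, -, -, hbij, c, hc⟩ := hcc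
  refine ⟨W, hWo, hxW, ?_⟩
  intro y hy i j k
  set A : (Fin n → ℝ) → ((Fin n → ℝ) →L[ℝ] (Fin n → ℝ)) := fun z => fderiv ℝ u z with hAdef
  have hWy : W ∈ nhds y := hWo.mem_nhds hy
  have hcu : ∀ z ∈ W, ContDiffAt ℝ (⊤ : ℕ∞) u z := fun z hz => hu.contDiffAt (hWo.mem_nhds hz)
  have hcA : ContDiffAt ℝ (⊤ : ℕ∞) A y := (hcu y hy).fderiv_right (by exact_mod_cast le_top)
  have hdA : DifferentiableAt ℝ A y := hcA.differentiableAt (by simp)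
  set A' := fderiv ℝ A y with hA'def
  have hA'at : HasFDerivAt A A' y := hdA.hasFDerivAt
  have hsymm : ∀ v w, A' v w = A' w v := by
    intro v w
    refine second_derivative_symmetric_of_eventually (f := u) (f' := A) ?_ hA'at v w
    filter_upwards [hWy] with z hz
    exact ((hcu z hz).differentiableAt (by simp)).hasFDerivAt
  have hunit : ∀ z ∈ W, ∃ uz : ((Fin n → ℝ) →L[ℝ] (Fin n → ℝ))ˣ, (uz : _) = A z := by
    intro z hz
    have hb : Function.Bijective (A z) := hbij z hz
    let e0 : (Fin n → ℝ) ≃ₗ[ℝ] (Fin n → ℝ) :=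
      LinearEquiv.ofBijective ((A z) : (Fin n → ℝ) →ₗ[ℝ] (Fin n → ℝ)) hb
    let e := e0.toContinuousLinearEquiv
    have he : ∀ w', e w' = A z w' := fun w' => rfl
    refine ⟨⟨A z, e.symm.toContinuousLinearMap, ?_, ?_⟩, rfl⟩
    · refine ContinuousLinearMap.ext fun v => ?_
      rw [ContinuousLinearMap.mul_apply, one_def, id_apply]
      show A z (e.symm v) = v
      rw [← he]
      exact e.apply_symm_apply v
    · refine ContinuousLinearMap.ext fun v => ?_
      rw [ContinuousLinearMap.mul_apply, one_def, id_apply]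
      show e.symm (A z v) = v
      rw [← he]
      exact e.symm_apply_apply v
  set B : (Fin n → ℝ) → ((Fin n → ℝ) →L[ℝ] (Fin n → ℝ)) := fun z => Ring.inverse (A z)
    with hBdef
  have hBu : ∀ z ∈ W, ∀ uz : ((Fin n → ℝ) →L[ℝ] (Fin n → ℝ))ˣ, (uz : _) = A z →
      B z = ((uz⁻¹ : _ˣ) : (Fin n → ℝ) →L[ℝ] (Fin n → ℝ)) := by
    intro z hz uz huz
    rw [hBdef]
    show Ring.inverse (A z) = _
    rw [← huz, Ring.inverse_unit]
  have hBA : ∀ z ∈ W, (B z).comp (A z) = ContinuousLinearMap.id ℝ (Fin n → ℝ) := by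
    intro z hz
    obtain ⟨uz, huz⟩ := hunit z hz
    rw [← mul_def, ← one_def, hBu z hz uz huz, ← huz]
    exact uz.inv_mul
  obtain ⟨uy, huy⟩ := hunit y hy
  have hBy : B y = ((uy⁻¹ : _ˣ) : (Fin n → ℝ) →L[ℝ] (Fin n → ℝ)) := hBu y hy uy huy
  set B' : (Fin n → ℝ) →L[ℝ] ((Fin n → ℝ) →L[ℝ] (Fin n → ℝ)) :=
    (-(ContinuousLinearMap.mulLeftRight ℝ _ (B y) (B y))).comp A' with hB'def
  have hB'at : HasFDerivAt B B' y := by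
    have h1 := hasFDerivAt_ringInverse (𝕜 := ℝ) uy
    rw [huy, ← hBy] at h1
    rw [hBdef, hB'def]
    exact h1.comp y hA'at
  -- antisymmetry of c on projections
  have hzero : ∀ φ : (Fin n → ℝ) →L[ℝ] ℝ, c ![φ, φ] = 0 := by
    intro φ
    rw [hc y hy ![φ, φ]]
    refine halt y (hWU hy) _ 0 1 (by decide) ?_
    simp
  have hL : ∀ (φ ψ : (Fin n → ℝ) →L[ℝ] ℝ),
      (c.toContinuousLinearMap ![0, ψ] 0) φ = c ![φ, ψ] := by
    intro φ ψ
    rw [ContinuousMultilinearMap.toContinuousLinearMap_apply, upd0]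
  have hR : ∀ (φ ψ : (Fin n → ℝ) →L[ℝ] ℝ),
      (c.toContinuousLinearMap ![φ, 0] 1) ψ = c ![φ, ψ] := by
    intro φ ψ
    rw [ContinuousMultilinearMap.toContinuousLinearMap_apply, upd1]
  have hanti : ∀ s w : Fin n, c ![(ContinuousLinearMap.proj w : (Fin n → ℝ) →L[ℝ] ℝ),
      ContinuousLinearMap.proj s]
      = - c ![(ContinuousLinearMap.proj s : (Fin n → ℝ) →L[ℝ] ℝ),
          ContinuousLinearMap.proj w] := by
    intro s w
    have h0 := hzero ((ContinuousLinearMap.proj s : (Fin n → ℝ) →L[ℝ] ℝ)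
      + ContinuousLinearMap.proj w)
    have haddL : ∀ (φ₁ φ₂ ψ : (Fin n → ℝ) →L[ℝ] ℝ),
        c ![φ₁ + φ₂, ψ] = c ![φ₁, ψ] + c ![φ₂, ψ] := by
      intro φ₁ φ₂ ψ
      rw [← hL (φ₁ + φ₂) ψ, map_add, hL, hL]
    have haddR : ∀ (φ ψ₁ ψ₂ : (Fin n → ℝ) →L[ℝ] ℝ),
        c ![φ, ψ₁ + ψ₂] = c ![φ, ψ₁] + c ![φ, ψ₂] := by
      intro φ ψ₁ ψ₂
      rw [← hR φ (ψ₁ + ψ₂), map_add, hR, hR]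
    rw [haddL, haddR, haddR, hzero, hzero] at h0
    linarith
  -- value of Vc on W
  have hVcW : ∀ p q : Fin n, ∀ z ∈ W, Vc p q z
      = c ![(ContinuousLinearMap.proj p).comp (B z),
          (ContinuousLinearMap.proj q).comp (B z)] := by
    intro p q z hz
    have h2 := hc z hz ![(ContinuousLinearMap.proj p).comp (B z),
      (ContinuousLinearMap.proj q).comp (B z)]
    rw [show fderiv ℝ u z = A z from rfl] at h2
    have harg : (fun i' : Fin 2 => ((![(ContinuousLinearMap.proj p).comp (B z),
        (ContinuousLinearMap.proj q).comp (B z)]) i').comp (A z))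
        = ![(ContinuousLinearMap.proj p : (Fin n → ℝ) →L[ℝ] ℝ),
            ContinuousLinearMap.proj q] := by
      funext i'
      fin_cases i'
      · show ((ContinuousLinearMap.proj p).comp (B z)).comp (A z) = _
        rw [ContinuousLinearMap.comp_assoc, hBA z hz, ContinuousLinearMap.comp_id]
        rfl
      · show ((ContinuousLinearMap.proj q).comp (B z)).comp (A z) = _
        rw [ContinuousLinearMap.comp_assoc, hBA z hz, ContinuousLinearMap.comp_id]
        rfl
    rw [harg] at h2
    rw [hVc, ← h2]
  -- coordinate values
  have hbb : ∀ p s : Fin n, ((ContinuousLinearMap.proj p :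
      (Fin n → ℝ) →L[ℝ] ℝ).comp (B y)) (Pi.single s 1) = B y (Pi.single s 1) p := by
    intro p s
    rfl
  have hcomp : ∀ v : Fin n → ℝ, ∀ p : Fin n, B y v p
      = ∑ m, v m * B y (Pi.single m 1) p := by
    intro v p
    rw [clm_expand (B y) v]
    simp only [Finset.sum_apply, Pi.smul_apply, smul_eq_mul]
  have hBval : ∀ p l s : Fin n, ((ContinuousLinearMap.proj p :
        (Fin n → ℝ) →L[ℝ] ℝ).comp (B' (Pi.single l 1))) (Pi.single s 1)
      = -(∑ t, ∑ m, B y (Pi.single s 1) t * A' (Pi.single l 1) (Pi.single t 1) m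
          * B y (Pi.single m 1) p) := by
    intro p l s
    have h1 : B' (Pi.single l 1) = -((B y) * (A' (Pi.single l 1)) * (B y)) := by
      rw [hB'def]
      simp only [ContinuousLinearMap.comp_apply, ContinuousLinearMap.neg_apply,
        ContinuousLinearMap.mulLeftRight_apply]
    rw [ContinuousLinearMap.comp_apply, h1, ContinuousLinearMap.neg_apply,
      ContinuousLinearMap.mul_apply, ContinuousLinearMap.mul_apply, map_neg,
      ContinuousLinearMap.proj_apply, neg_inj]
    have h4 : A' (Pi.single l 1) (B y (Pi.single s 1))
        = ∑ t, B y (Pi.single s 1) t • A' (Pi.single l 1) (Pi.single t 1) :=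
      clm_expand _ _
    rw [h4, map_sum, Finset.sum_apply]
    refine Finset.sum_congr rfl fun t _ => ?_
    rw [map_smul, Pi.smul_apply, smul_eq_mul, hcomp (A' (Pi.single l 1) (Pi.single t 1)) p,
      Finset.mul_sum]
    exact Finset.sum_congr rfl fun m _ => by ring
  -- the derivative of the components, in scalar form
  have hD : ∀ p q l : Fin n, fderiv ℝ (Vc p q) y (Pi.single l 1)
      = Xfun (fun r s => B y (Pi.single s 1) r)
          (fun l t m => A' (Pi.single l 1) (Pi.single t 1) m)
          (fun s w => c ![ContinuousLinearMap.proj s, ContinuousLinearMap.proj w]) q p l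
        - Xfun (fun r s => B y (Pi.single s 1) r)
          (fun l t m => A' (Pi.single l 1) (Pi.single t 1) m)
          (fun s w => c ![ContinuousLinearMap.proj s, ContinuousLinearMap.proj w]) p q l := by
    intro p q l
    obtain ⟨D, hDat, hDval⟩ := der_exists c B B' y hB'at p q
    have heq : Vc p q =ᶠ[nhds y] (fun z => c ![(ContinuousLinearMap.proj p).comp (B z),
        (ContinuousLinearMap.proj q).comp (B z)]) := by
      filter_upwards [hWy] with z hz
      exact hVcW p q z hz
    rw [heq.fderiv_eq, hDat.fderiv, hDval]
    rw [cexp c ((ContinuousLinearMap.proj p).comp (B' (Pi.single l 1)))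
        ((ContinuousLinearMap.proj q).comp (B y)),
      cexp c ((ContinuousLinearMap.proj p).comp (B y))
        ((ContinuousLinearMap.proj q).comp (B' (Pi.single l 1)))]
    have t1 : (∑ s, ∑ w, ((ContinuousLinearMap.proj p :
          (Fin n → ℝ) →L[ℝ] ℝ).comp (B' (Pi.single l 1))) (Pi.single s 1)
        * ((ContinuousLinearMap.proj q : (Fin n → ℝ) →L[ℝ] ℝ).comp (B y)) (Pi.single w 1)
        * c ![ContinuousLinearMap.proj s, ContinuousLinearMap.proj w])
        = -(Xfun (fun r s => B y (Pi.single s 1) r)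
            (fun l t m => A' (Pi.single l 1) (Pi.single t 1) m)
            (fun s w => c ![ContinuousLinearMap.proj s, ContinuousLinearMap.proj w]) p q l) := by
      unfold Xfun
      rw [← Finset.sum_neg_distrib]
      refine Finset.sum_congr rfl fun s _ => ?_
      rw [← Finset.sum_neg_distrib]
      refine Finset.sum_congr rfl fun w _ => ?_
      rw [hBval p l s, hbb q w]
      ring
    have t2 : (∑ s, ∑ w, ((ContinuousLinearMap.proj p :
          (Fin n → ℝ) →L[ℝ] ℝ).comp (B y)) (Pi.single s 1)
        * ((ContinuousLinearMap.proj q : (Fin n → ℝ) →L[ℝ] ℝ).comp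
            (B' (Pi.single l 1))) (Pi.single w 1)
        * c ![ContinuousLinearMap.proj s, ContinuousLinearMap.proj w])
        = Xfun (fun r s => B y (Pi.single s 1) r)
            (fun l t m => A' (Pi.single l 1) (Pi.single t 1) m)
            (fun s w => c ![ContinuousLinearMap.proj s, ContinuousLinearMap.proj w]) q p l := by
      have step : (∑ s, ∑ w, ((ContinuousLinearMap.proj p :
            (Fin n → ℝ) →L[ℝ] ℝ).comp (B y)) (Pi.single s 1)
          * ((ContinuousLinearMap.proj q : (Fin n → ℝ) →L[ℝ] ℝ).comp
              (B' (Pi.single l 1))) (Pi.single w 1)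
          * c ![ContinuousLinearMap.proj s, ContinuousLinearMap.proj w])
          = ∑ s, ∑ w, (-(B y (Pi.single s 1) p
            * (∑ t, ∑ m, B y (Pi.single w 1) t * A' (Pi.single l 1) (Pi.single t 1) m
                * B y (Pi.single m 1) q)
            * c ![ContinuousLinearMap.proj s, ContinuousLinearMap.proj w])) := by
        refine Finset.sum_congr rfl fun s _ => Finset.sum_congr rfl fun w _ => ?_
        rw [hBval q l w, hbb p s]
        ring
      rw [step, Finset.sum_comm]
      unfold Xfun
      refine Finset.sum_congr rfl fun s _ => Finset.sum_congr rfl fun w _ => ?_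
      rw [hanti s w]
      ring
    rw [t1, t2]
    ring
  -- value of Vc at y in scalar form
  have hVeq : ∀ a b : Fin n, Vc a b y
      = VCfun (fun r s => B y (Pi.single s 1) r)
          (fun s w => c ![ContinuousLinearMap.proj s, ContinuousLinearMap.proj w]) a b := by
    intro a b
    rw [hVcW a b y hy, cexp c]
    unfold VCfun
    refine Finset.sum_congr rfl fun p _ => Finset.sum_congr rfl fun q _ => ?_
    rw [hbb a p, hbb b q]
  -- assemble
  have haa : ∀ l t m : Fin n,
      (fun l t m => A' (Pi.single l 1) (Pi.single t 1) m) l t m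
      = (fun l t m => A' (Pi.single l 1) (Pi.single t 1) m) t l m :=
    fun l t m => congrFun (hsymm _ _) m
  calc ∑ l : Fin n,
        (Vc l i y * fderiv ℝ (Vc j k) y (Pi.single l 1) +
         Vc l j y * fderiv ℝ (Vc k i) y (Pi.single l 1) +
         Vc l k y * fderiv ℝ (Vc i j) y (Pi.single l 1))
      = ∑ l : Fin n,
        (VCfun (fun r s => B y (Pi.single s 1) r)
            (fun s w => c ![ContinuousLinearMap.proj s, ContinuousLinearMap.proj w]) l i
          * (Xfun (fun r s => B y (Pi.single s 1) r)
              (fun l t m => A' (Pi.single l 1) (Pi.single t 1) m)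
              (fun s w => c ![ContinuousLinearMap.proj s, ContinuousLinearMap.proj w]) k j l
            - Xfun (fun r s => B y (Pi.single s 1) r)
              (fun l t m => A' (Pi.single l 1) (Pi.single t 1) m)
              (fun s w => c ![ContinuousLinearMap.proj s, ContinuousLinearMap.proj w]) j k l)
        + VCfun (fun r s => B y (Pi.single s 1) r)
            (fun s w => c ![ContinuousLinearMap.proj s, ContinuousLinearMap.proj w]) l j
          * (Xfun (fun r s => B y (Pi.single s 1) r)
              (fun l t m => A' (Pi.single l 1) (Pi.single t 1) m)
              (fun s w => c ![ContinuousLinearMap.proj s, ContinuousLinearMap.proj w]) i k l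
            - Xfun (fun r s => B y (Pi.single s 1) r)
              (fun l t m => A' (Pi.single l 1) (Pi.single t 1) m)
              (fun s w => c ![ContinuousLinearMap.proj s, ContinuousLinearMap.proj w]) k i l)
        + VCfun (fun r s => B y (Pi.single s 1) r)
            (fun s w => c ![ContinuousLinearMap.proj s, ContinuousLinearMap.proj w]) l k
          * (Xfun (fun r s => B y (Pi.single s 1) r)
              (fun l t m => A' (Pi.single l 1) (Pi.single t 1) m)
              (fun s w => c ![ContinuousLinearMap.proj s, ContinuousLinearMap.proj w]) j i l
            - Xfun (fun r s => B y (Pi.single s 1) r)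
              (fun l t m => A' (Pi.single l 1) (Pi.single t 1) m)
              (fun s w => c ![ContinuousLinearMap.proj s, ContinuousLinearMap.proj w]) i j l)) := by
        refine Finset.sum_congr rfl fun l _ => ?_
        rw [hVeq l i, hVeq l j, hVeq l k, hD j k l, hD k i l, hD i j l]
    _ = 0 := schouten_algebra _ _ _ haa i j k
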